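/- Let L be an e-cyclic residuated lattice and let X, Y, Z be convex subalgebras of L. Then X ∩ C[Y ∪ Z] = C[(X ∩ Y) ∪ (X ∩ Z)]. (This says that the lattice of convex subalgebras of L, ordered by inclusion, with meet given by intersection and join given by K ∨ K' = C[K ∪ K'], is distributive.) -/

import Mathlib

universe u

/-- A residuated lattice: a lattice-ordered monoid with left and right residuals.
`ldiv x z` is `x \ z` and `rdiv z y` is `z / y`. -/
class ResiduatedLattice (α : Type u) extends Lattice α, Monoid α where
  ldiv : α → α → α
  rdiv : α → α → α
  mul_le_iff_le_ldiv : ∀ x y z : α, x * y ≤ z ↔ y ≤ ldiv x z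
  mul_le_iff_le_rdiv : ∀ x y z : α, x * y ≤ z ↔ x ≤ rdiv z y

namespace ResiduatedLattice

variable {α : Type u} [ResiduatedLattice α]

/-- `L` is e-cyclic if `x \ e = e / x` for all `x`. -/
def ECyclic (α : Type u) [ResiduatedLattice α] : Prop :=
  ∀ x : α, ldiv x 1 = rdiv 1 x

/-- Absolute value: `|x| = x ⊓ (e / x) ⊓ e`. -/
def absv (x : α) : α := x ⊓ rdiv 1 x ⊓ 1

/-- A convex subalgebra: contains `e`, closed under all the operations, and order-convex. -/
structure IsConvexSubalgebra (H : Set α) : Prop where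
  one_mem : (1 : α) ∈ H
  mul_mem : ∀ ⦃x⦄, x ∈ H → ∀ ⦃y⦄, y ∈ H → x * y ∈ H
  sup_mem : ∀ ⦃x⦄, x ∈ H → ∀ ⦃y⦄, y ∈ H → x ⊔ y ∈ H
  inf_mem : ∀ ⦃x⦄, x ∈ H → ∀ ⦃y⦄, y ∈ H → x ⊓ y ∈ H
  ldiv_mem : ∀ ⦃x⦄, x ∈ H → ∀ ⦃y⦄, y ∈ H → ldiv x y ∈ H
  rdiv_mem : ∀ ⦃x⦄, x ∈ H → ∀ ⦃y⦄, y ∈ H → rdiv x y ∈ H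
  convex : ∀ ⦃a⦄, a ∈ H → ∀ ⦃b⦄, b ∈ H → ∀ ⦃x⦄, a ≤ x → x ≤ b → x ∈ H

/-- `C[S]`: the smallest convex subalgebra containing `S`. -/
def convexClosure (S : Set α) : Set α :=
  ⋂₀ {H : Set α | IsConvexSubalgebra H ∧ S ⊆ H}

end ResiduatedLattice

open ResiduatedLattice

namespace RLAux

variable {α : Type u} [ResiduatedLattice α]

lemma ldiv_iff {x y z : α} : x * y ≤ z ↔ y ≤ ldiv x z :=
  ResiduatedLattice.mul_le_iff_le_ldiv x y z

lemma rdiv_iff {x y z : α} : x * y ≤ z ↔ x ≤ rdiv z y :=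
  ResiduatedLattice.mul_le_iff_le_rdiv x y z

lemma mul_le_mul_left' {y z : α} (h : y ≤ z) (x : α) : x * y ≤ x * z :=
  ldiv_iff.2 (h.trans (ldiv_iff.1 le_rfl))

lemma mul_le_mul_right' {x y : α} (h : x ≤ y) (z : α) : x * z ≤ y * z :=
  rdiv_iff.2 (h.trans (rdiv_iff.1 le_rfl))

lemma mul_le_mul'' {a b c d : α} (h1 : a ≤ b) (h2 : c ≤ d) : a * c ≤ b * d :=
  (mul_le_mul_left' h2 a).trans (mul_le_mul_right' h1 d)

lemma mul_sup' (x y z : α) : x * (y ⊔ z) = x * y ⊔ x * z := by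
  apply le_antisymm
  · exact ldiv_iff.2 (sup_le (ldiv_iff.1 le_sup_left) (ldiv_iff.1 le_sup_right))
  · exact sup_le (mul_le_mul_left' le_sup_left x) (mul_le_mul_left' le_sup_right x)

lemma sup_mul' (x y z : α) : (x ⊔ y) * z = x * z ⊔ y * z := by
  apply le_antisymm
  · exact rdiv_iff.2 (sup_le (rdiv_iff.1 le_sup_left) (rdiv_iff.1 le_sup_right))
  · exact sup_le (mul_le_mul_right' le_sup_left z) (mul_le_mul_right' le_sup_right z)

lemma absv_le_self (x : α) : absv x ≤ x := inf_le_left.trans inf_le_left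

lemma absv_le_one (x : α) : absv x ≤ 1 := inf_le_right

lemma absv_le_rdiv (x : α) : absv x ≤ rdiv 1 x := inf_le_left.trans inf_le_right

lemma le_absv {u x : α} (h1 : u ≤ x) (h2 : u * x ≤ 1) (h3 : u ≤ 1) : u ≤ absv x :=
  le_inf (le_inf h1 (rdiv_iff.1 h2)) h3

lemma absv_mul_self_le (x : α) : absv x * x ≤ 1 := rdiv_iff.2 (absv_le_rdiv x)

lemma self_mul_absv_le (hec : ECyclic α) (x : α) : x * absv x ≤ 1 :=
  ldiv_iff.2 ((absv_le_rdiv x).trans (hec x).symm.le)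

lemma absv_of_le_one {w : α} (h : w ≤ 1) : absv w = w := by
  refine le_antisymm (absv_le_self w) (le_absv le_rfl ?_ h)
  calc w * w ≤ 1 * 1 := mul_le_mul'' h h
  _ = 1 := one_mul 1

/-- The candidate for `C[S]`: elements whose absolute value dominates a product of
absolute values of elements of `S`. -/
def D (S : Set α) : Set α :=
  {x | ∃ u ∈ Submonoid.closure (absv '' S), u ≤ absv x}

lemma mem_closure_le_one {S : Set α} {u : α}
    (hu : u ∈ Submonoid.closure (absv '' S)) : u ≤ 1 := by
  induction hu using Submonoid.closure_induction with
  | mem t ht => obtain ⟨s, _, rfl⟩ := ht; exact absv_le_one s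
  | one => exact le_rfl
  | mul a b _ _ ha hb => calc a * b ≤ 1 * 1 := mul_le_mul'' ha hb
                          _ = 1 := one_mul 1

section Witness

variable (hec : ECyclic α) {u v x y : α} (hu : u ≤ absv x) (hv : v ≤ absv y)

include hu

lemma w_le_x : u ≤ x := hu.trans (absv_le_self x)
lemma w_le_one : u ≤ 1 := hu.trans (absv_le_one x)
lemma w_mul_le : u * x ≤ 1 := rdiv_iff.2 (hu.trans (absv_le_rdiv x))
include hec in
lemma w_mul_le' : x * u ≤ 1 := ldiv_iff.2 (hu.trans ((absv_le_rdiv x).trans (hec x).symm.le))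

include hv

lemma witness_sup : u * v ≤ absv (x ⊔ y) := by
  refine le_absv ?_ ?_ ?_
  · calc u * v ≤ x * 1 := mul_le_mul'' (w_le_x hu) (w_le_one hv)
    _ = x := mul_one x
    _ ≤ x ⊔ y := le_sup_left
  · rw [mul_sup' (u * v) x y]
    refine sup_le ?_ ?_
    · calc u * v * x ≤ u * 1 * x := mul_le_mul_right' (mul_le_mul_left' (w_le_one hv) u) x
      _ = u * x := by rw [mul_one]
      _ ≤ 1 := w_mul_le hu
    · calc u * v * y = u * (v * y) := mul_assoc u v y
      _ ≤ 1 * 1 := mul_le_mul'' (w_le_one hu) (w_mul_le hv)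
      _ = 1 := one_mul 1
  · calc u * v ≤ 1 * 1 := mul_le_mul'' (w_le_one hu) (w_le_one hv)
    _ = 1 := one_mul 1

lemma witness_inf : u * v ≤ absv (x ⊓ y) := by
  refine le_absv (le_inf ?_ ?_) ?_ ?_
  · calc u * v ≤ x * 1 := mul_le_mul'' (w_le_x hu) (w_le_one hv)
    _ = x := mul_one x
  · calc u * v ≤ 1 * y := mul_le_mul'' (w_le_one hu) (w_le_x hv)
    _ = y := one_mul y
  · calc u * v * (x ⊓ y) ≤ u * 1 * x := mul_le_mul'' (mul_le_mul_left' (w_le_one hv) u) inf_le_left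
    _ = u * x := by rw [mul_one]
    _ ≤ 1 := w_mul_le hu
  · calc u * v ≤ 1 * 1 := mul_le_mul'' (w_le_one hu) (w_le_one hv)
    _ = 1 := one_mul 1

include hec

omit hec in
lemma witness_mul : u * v * v * u ≤ absv (x * y) := by
  have hu1 := w_le_one hu
  have hv1 := w_le_one hv
  have hw1 : u * v * v * u ≤ 1 := by
    calc u * v * v * u ≤ 1 * 1 * 1 * 1 :=
      mul_le_mul'' (mul_le_mul'' (mul_le_mul'' hu1 hv1) hv1) hu1
    _ = 1 := by simp
  refine le_absv ?_ ?_ hw1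
  · calc u * v * v * u ≤ x * y * 1 * 1 :=
      mul_le_mul'' (mul_le_mul'' (mul_le_mul'' (w_le_x hu) (w_le_x hv)) hv1) (w_le_one hu)
    _ = x * y := by simp
  · have hvu : u * v * v * u ≤ v * u := by
      have huv1 : u * v ≤ 1 := by
        calc u * v ≤ 1 * 1 := mul_le_mul'' hu1 hv1
        _ = 1 := one_mul 1
      calc u * v * v * u = (u * v) * (v * u) := by simp only [mul_assoc]
      _ ≤ 1 * (v * u) := mul_le_mul_right' huv1 (v * u)
      _ = v * u := one_mul _
    have key : v * u * (x * y) ≤ 1 := by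
      calc v * u * (x * y) = v * ((u * x) * y) := by simp only [mul_assoc]
      _ ≤ v * (1 * y) := mul_le_mul_left' (mul_le_mul_right' (w_mul_le hu) y) v
      _ = v * y := by rw [one_mul]
      _ ≤ 1 := w_mul_le hv
    exact (mul_le_mul_right' hvu (x * y)).trans key

lemma witness_ldiv : u * v * v * u ≤ absv (ldiv x y) := by
  have hu1 := w_le_one hu
  have hv1 := w_le_one hv
  have huv1 : u * v ≤ 1 := by
    calc u * v ≤ 1 * 1 := mul_le_mul'' hu1 hv1
    _ = 1 := one_mul 1
  have hw1 : u * v * v * u ≤ 1 := by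
    calc u * v * v * u ≤ 1 * 1 * 1 * 1 :=
      mul_le_mul'' (mul_le_mul'' (mul_le_mul'' hu1 hv1) hv1) hu1
    _ = 1 := by simp
  have hxt : x * (ldiv x y) ≤ y := ldiv_iff.2 le_rfl
  refine le_absv ?_ ?_ hw1
  · refine ldiv_iff.1 ?_
    calc x * (u * v * v * u) = (x * u) * (v * (v * u)) := by simp only [mul_assoc]
    _ ≤ 1 * (y * (1 * 1)) := mul_le_mul'' (w_mul_le' hec hu)
        (mul_le_mul'' (w_le_x hv) (mul_le_mul'' hv1 hu1))
    _ = y := by simp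
  · have hw_vu : u * v * v * u ≤ v * u := by
      calc u * v * v * u = (u * v) * (v * u) := by simp only [mul_assoc]
      _ ≤ 1 * (v * u) := mul_le_mul_right' huv1 (v * u)
      _ = v * u := one_mul _
    have key : v * u * (ldiv x y) ≤ 1 := by
      calc v * u * (ldiv x y) = v * (u * ldiv x y) := mul_assoc v u _
      _ ≤ v * (x * ldiv x y) := mul_le_mul_left' (mul_le_mul_right' (w_le_x hu) _) v
      _ ≤ v * y := mul_le_mul_left' hxt v
      _ ≤ 1 := w_mul_le hv
    exact (mul_le_mul_right' hw_vu (ldiv x y)).trans key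

lemma witness_rdiv : u * v * v * u ≤ absv (rdiv y x) := by
  have hu1 := w_le_one hu
  have hv1 := w_le_one hv
  have hvu1 : v * u ≤ 1 := by
    calc v * u ≤ 1 * 1 := mul_le_mul'' hv1 hu1
    _ = 1 := one_mul 1
  have hw1 : u * v * v * u ≤ 1 := by
    calc u * v * v * u ≤ 1 * 1 * 1 * 1 :=
      mul_le_mul'' (mul_le_mul'' (mul_le_mul'' hu1 hv1) hv1) hu1
    _ = 1 := by simp
  have htx : (rdiv y x) * x ≤ y := rdiv_iff.2 le_rfl
  refine le_absv ?_ ?_ hw1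
  · refine rdiv_iff.1 ?_
    calc u * v * v * u * x = (u * v * v) * (u * x) := by simp only [mul_assoc]
    _ ≤ (1 * y * 1) * 1 := mul_le_mul''
        (mul_le_mul'' (mul_le_mul'' hu1 (w_le_x hv)) hv1) (w_mul_le hu)
    _ = y := by simp
  · have hw_uv : u * v * v * u ≤ u * v := by
      calc u * v * v * u = (u * v) * (v * u) := by simp only [mul_assoc]
      _ ≤ (u * v) * 1 := mul_le_mul_left' hvu1 (u * v)
      _ = u * v := mul_one _
    have hvt : v * rdiv y x ≤ ldiv u 1 := by
      rw [hec u]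
      refine rdiv_iff.1 ?_
      calc v * rdiv y x * u = v * (rdiv y x * u) := mul_assoc v _ u
      _ ≤ v * (rdiv y x * x) := mul_le_mul_left' (mul_le_mul_left' (w_le_x hu) _) v
      _ ≤ v * y := mul_le_mul_left' htx v
      _ ≤ 1 := w_mul_le hv
    have key : u * v * rdiv y x ≤ 1 := by
      calc u * v * rdiv y x = u * (v * rdiv y x) := mul_assoc u v _
      _ ≤ 1 := ldiv_iff.2 hvt
    exact (mul_le_mul_right' hw_uv (rdiv y x)).trans key

end Witness

lemma D_isConvexSubalgebra (hec : ECyclic α) (S : Set α) :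
    IsConvexSubalgebra (D S) := by
  constructor
  · exact ⟨1, Submonoid.one_mem _, by rw [absv_of_le_one le_rfl]⟩
  · rintro x ⟨u, huM, hu⟩ y ⟨v, hvM, hv⟩
    exact ⟨u * v * v * u,
      Submonoid.mul_mem _ (Submonoid.mul_mem _ (Submonoid.mul_mem _ huM hvM) hvM) huM,
      witness_mul hu hv⟩
  · rintro x ⟨u, huM, hu⟩ y ⟨v, hvM, hv⟩
    exact ⟨u * v, Submonoid.mul_mem _ huM hvM, witness_sup hu hv⟩
  · rintro x ⟨u, huM, hu⟩ y ⟨v, hvM, hv⟩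
    exact ⟨u * v, Submonoid.mul_mem _ huM hvM, witness_inf hu hv⟩
  · rintro x ⟨u, huM, hu⟩ y ⟨v, hvM, hv⟩
    exact ⟨u * v * v * u,
      Submonoid.mul_mem _ (Submonoid.mul_mem _ (Submonoid.mul_mem _ huM hvM) hvM) huM,
      witness_ldiv hec hu hv⟩
  · rintro y ⟨v, hvM, hv⟩ x ⟨u, huM, hu⟩
    -- goal : rdiv y x ∈ D S ; careful with argument order
    exact ⟨u * v * v * u,
      Submonoid.mul_mem _ (Submonoid.mul_mem _ (Submonoid.mul_mem _ huM hvM) hvM) huM,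
      witness_rdiv hec hu hv⟩
  · rintro a ⟨u, huM, hu⟩ b ⟨v, hvM, hv⟩ x hax hxb
    refine ⟨u * v, Submonoid.mul_mem _ huM hvM, le_absv ?_ ?_ ?_⟩
    · calc u * v ≤ a * 1 := mul_le_mul'' (w_le_x hu) (w_le_one hv)
      _ = a := mul_one a
      _ ≤ x := hax
    · calc u * v * x ≤ 1 * v * b := mul_le_mul'' (mul_le_mul_right' (w_le_one hu) v) hxb
      _ = v * b := by rw [one_mul]
      _ ≤ 1 := w_mul_le hv
    · calc u * v ≤ 1 * 1 := mul_le_mul'' (w_le_one hu) (w_le_one hv)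
      _ = 1 := one_mul 1

lemma subset_D (S : Set α) : S ⊆ D S := fun s hs =>
  ⟨absv s, Submonoid.subset_closure ⟨s, hs, rfl⟩, le_rfl⟩

lemma mem_of_mem_closure {S H : Set α} (hH : IsConvexSubalgebra H) (hSH : S ⊆ H)
    {u : α} (huM : u ∈ Submonoid.closure (absv '' S)) : u ∈ H := by
  induction huM using Submonoid.closure_induction with
  | mem t ht =>
    obtain ⟨s, hs, rfl⟩ := ht
    exact hH.inf_mem (hH.inf_mem (hSH hs) (hH.rdiv_mem hH.one_mem (hSH hs))) hH.one_mem
  | one => exact hH.one_mem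
  | mul a b _ _ ha hb => exact hH.mul_mem ha hb

lemma D_subset {S H : Set α} (hH : IsConvexSubalgebra H) (hSH : S ⊆ H) : D S ⊆ H := by
  rintro x ⟨u, huM, hu⟩
  have h1 : u ≤ x := hu.trans (absv_le_self x)
  have h2 : x ≤ ldiv u 1 := ldiv_iff.1 (rdiv_iff.2 (hu.trans (absv_le_rdiv x)))
  have huH : u ∈ H := mem_of_mem_closure hH hSH huM
  exact hH.convex huH (hH.ldiv_mem huH hH.one_mem) h1 h2

lemma convexClosure_eq_D (hec : ECyclic α) (S : Set α) : convexClosure S = D S := by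
  apply subset_antisymm
  · exact Set.sInter_subset_of_mem ⟨D_isConvexSubalgebra hec S, subset_D S⟩
  · intro x hx
    rintro H ⟨hH, hSH⟩
    exact D_subset hH hSH hx

lemma list_prod_le_one : ∀ l : List α, (∀ t ∈ l, t ≤ 1) → l.prod ≤ 1 := by
  intro l
  induction l with
  | nil => simp
  | cons t l ih =>
    intro hl
    rw [List.prod_cons]
    calc t * l.prod ≤ 1 * 1 := mul_le_mul'' (hl t List.mem_cons_self)
          (ih fun s hs => hl s (List.mem_cons_of_mem t hs))
    _ = 1 := one_mul 1

lemma prod_map_sup_le {a : α} (ha : a ≤ 1) :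
    ∀ l : List α, (∀ t ∈ l, t ≤ 1) → (l.map (· ⊔ a)).prod ≤ a ⊔ l.prod := by
  intro l
  induction l with
  | nil => intro _; simp [sup_of_le_right ha]
  | cons t l ih =>
    intro hl
    have ht : t ≤ 1 := hl t List.mem_cons_self
    have hl' : ∀ s ∈ l, s ≤ 1 := fun s hs => hl s (List.mem_cons_of_mem t hs)
    have hP : l.prod ≤ 1 := list_prod_le_one l hl' 
    calc (List.map (· ⊔ a) (t :: l)).prod = (t ⊔ a) * (l.map (· ⊔ a)).prod := by
          simp [List.map_cons, List.prod_cons]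
    _ ≤ (t ⊔ a) * (a ⊔ l.prod) := mul_le_mul_left' (ih hl') _
    _ = t * a ⊔ t * l.prod ⊔ (a * a ⊔ a * l.prod) := by
          rw [sup_mul', mul_sup', mul_sup']
    _ ≤ a ⊔ (t :: l).prod := by
          rw [List.prod_cons]
          refine sup_le (sup_le ?_ ?_) (sup_le ?_ ?_)
          · exact le_sup_of_le_left ((mul_le_mul_right' ht a).trans (one_mul a).le)
          · exact le_sup_right
          · exact le_sup_of_le_left ((mul_le_mul_left' ha a).trans (mul_one a).le)
          · exact le_sup_of_le_left ((mul_le_mul_left' hP a).trans (mul_one a).le)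

end RLAux

open RLAux

/-- the lattice of convex subalgebras is distributive. -/
theorem stmt4 {α : Type u} [ResiduatedLattice α] (hec : ECyclic α)
    (X Y Z : Set α) (hX : IsConvexSubalgebra X) (hY : IsConvexSubalgebra Y)
    (hZ : IsConvexSubalgebra Z) :
    X ∩ convexClosure (Y ∪ Z) = convexClosure ((X ∩ Y) ∪ (X ∩ Z)) := by
  apply subset_antisymm
  · rintro x ⟨hxX, hxC⟩
    rw [convexClosure_eq_D hec] at hxC ⊢
    obtain ⟨u, huM, hu⟩ := hxC
    obtain ⟨l, hl, rfl⟩ := Submonoid.exists_list_of_mem_closure huM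
    set a := absv x with ha_def
    have haX : a ∈ X := hX.inf_mem (hX.inf_mem hxX (hX.rdiv_mem hX.one_mem hxX)) hX.one_mem
    have ha1 : a ≤ 1 := absv_le_one x
    have hl1 : ∀ t ∈ l, t ≤ 1 := by
      intro t ht
      obtain ⟨s, _, rfl⟩ := hl t ht
      exact absv_le_one s
    have hmem : ∀ t ∈ l.map (· ⊔ a), t ∈ absv '' ((X ∩ Y) ∪ (X ∩ Z)) := by
      intro w hw
      rw [List.mem_map] at hw
      obtain ⟨t, htl, rfl⟩ := hw
      obtain ⟨s, hs, rfl⟩ := hl t htl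
      have hw1 : absv s ⊔ a ≤ 1 := sup_le (absv_le_one s) ha1
      have hwX : absv s ⊔ a ∈ X := hX.convex haX hX.one_mem le_sup_right hw1
      refine ⟨absv s ⊔ a, ?_, absv_of_le_one hw1⟩
      rcases hs with hsY | hsZ
      · refine Or.inl ⟨hwX, ?_⟩
        have : absv s ∈ Y :=
          hY.inf_mem (hY.inf_mem hsY (hY.rdiv_mem hY.one_mem hsY)) hY.one_mem
        exact hY.convex this hY.one_mem le_sup_left hw1
      · refine Or.inr ⟨hwX, ?_⟩
        have : absv s ∈ Z :=
          hZ.inf_mem (hZ.inf_mem hsZ (hZ.rdiv_mem hZ.one_mem hsZ)) hZ.one_mem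
        exact hZ.convex this hZ.one_mem le_sup_left hw1
    refine ⟨(l.map (· ⊔ a)).prod, ?_, ?_⟩
    · exact Submonoid.list_prod_mem _ (fun w hw => Submonoid.subset_closure (hmem w hw))
    · calc (l.map (· ⊔ a)).prod ≤ a ⊔ l.prod := prod_map_sup_le ha1 l hl1
      _ ≤ a ⊔ a := sup_le_sup_left hu a
      _ = a := sup_idem a
  · refine Set.subset_inter ?_ ?_
    · exact Set.sInter_subset_of_mem
        ⟨hX, Set.union_subset (Set.inter_subset_left) (Set.inter_subset_left)⟩
    · intro x hx
      rintro H hH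
      exact hx H ⟨hH.1, (Set.union_subset
        ((Set.inter_subset_right).trans Set.subset_union_left)
        ((Set.inter_subset_right).trans Set.subset_union_right)).trans hH.2⟩
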